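/- Suppose n ≥ 2 and M(1), …, M(n) are distinct non-zero integers such that M(1) ≥ 2, |M(j)| + 1 < M(1) for all 2 ≤ j ≤ n, and |M(j)| ≠ |M(k)| − 1 for all 1 ≤ j, k ≤ n. Then the equation x = M(1) + M(2)/x + M(3)/x² + … + M(n)/x^{n−1} has a real solution β > 1 which is a generalized Parry number. -/

import Mathlib

open Finset

/-- The index `k` such that `x ∈ I_k`, where `I_0 = [0, 1/β]`,
`I_k = (k/β, (k+1)/β]` for `1 ≤ k ≤ m-1` and `I_m = (m/β, 1]`. -/
noncomputable def branchIdx (β x : ℝ) : ℕ := (⌈β * x⌉ - 1).toNat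

/-- The generalized β-transformation `f_{β,E}`, where `E` records the signs of the branches. -/
noncomputable def gbeta (β : ℝ) (E : ℕ → ℤ) (x : ℝ) : ℝ :=
  if E (branchIdx β x) = 1 then β * x - branchIdx β x
  else -(β * x) + branchIdx β x + 1

/-- The sign `e(j)` of the branch containing `f^{j-1}(1)`. -/
noncomputable def esign (β : ℝ) (E : ℕ → ℤ) (j : ℕ) : ℤ :=
  E (branchIdx β ((gbeta β E)^[j - 1] 1))

/-- The cumulative sign `s(j)`, with `s(1) = 1` and `s(j+1) = e(j)·s(j)`. -/
noncomputable def csign (β : ℝ) (E : ℕ → ℤ) (j : ℕ) : ℤ :=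
  ∏ l ∈ Finset.Ico 1 j, esign β E l

/-- The digit `d(j)` of the (β,E)-expansion of 1. -/
noncomputable def digit (β : ℝ) (E : ℕ → ℤ) (j : ℕ) : ℕ :=
  if E (branchIdx β ((gbeta β E)^[j - 1] 1)) = 1
  then branchIdx β ((gbeta β E)^[j - 1] 1)
  else branchIdx β ((gbeta β E)^[j - 1] 1) + 1

/-- The signed orbit `c_j = s(j+1)·f^j(1)`, with `c_0 = 1`. -/
noncomputable def sorbit (β : ℝ) (E : ℕ → ℤ) (j : ℕ) : ℝ :=
  (csign β E (j + 1) : ℝ) * (gbeta β E)^[j] 1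

/-- The data `(m, β, E)` is valid for a generalized β-transformation:
`m ≥ 1`, `β ∈ (m, m+1]` and `E(0), …, E(m) ∈ {1, -1}`. -/
def IsGBetaValid (m : ℕ) (β : ℝ) (E : ℕ → ℤ) : Prop :=
  1 ≤ m ∧ (m : ℝ) < β ∧ β ≤ m + 1 ∧ ∀ k ≤ m, E k = 1 ∨ E k = -1

/-- `f_{β,E}` is post-critically finite: the orbit of `1` is finite. -/
def IsPCF (β : ℝ) (E : ℕ → ℤ) : Prop :=
  Set.Finite {x : ℝ | ∃ j : ℕ, (gbeta β E)^[j] 1 = x}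

/-- `β > 1` is a generalized Parry number if some `f_{β,E}` is post-critically finite. -/
def IsGenParry (β : ℝ) : Prop :=
  1 < β ∧ ∃ (m : ℕ) (E : ℕ → ℤ), IsGBetaValid m β E ∧ IsPCF β E

/-- `z` is a Galois conjugate of `β`: a root of the minimal polynomial of `β` over `ℚ`
different from `β` itself. -/
def IsGaloisConj (z : ℂ) (β : ℝ) : Prop :=
  z ≠ (β : ℂ) ∧ Polynomial.aeval z (minpoly ℚ β) = 0

/-- `Ω`: the set of all Galois conjugates of all generalized Parry numbers. -/
def OmegaSet : Set ℂ := {z : ℂ | ∃ β : ℝ, IsGenParry β ∧ IsGaloisConj z β}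

/-- `𝓖`: the set of zeros in the open unit disk of functions
`T(w) = 1 + Σ_{j≥1} a_j w^j` with coefficients `a_j ∈ [-1,1]` (the class `𝓕`). -/
def mathcalG : Set ℂ :=
  {l : ℂ | ‖l‖ < 1 ∧ ∃ a : ℕ → ℝ, (∀ j : ℕ, a (j + 1) ∈ Set.Icc (-1 : ℝ) 1) ∧
    1 + ∑' j : ℕ, (a (j + 1) : ℂ) * l ^ (j + 1) = 0}

/-- The itinerary data `It(j)` associated to a finite sequence `(s(j), a(j))_{j=1}^n`. -/
def ItSeq (n : ℕ) (s : ℕ → ℤ) (a : ℕ → ℕ) (j : ℕ) : ℕ :=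
  if j = n then a n else if s (j + 1) = s j then a j else a j - 1

/-- The tail sum `R_j(x) = Σ_{i=j}^{n-1} s(i+1) a(i+1) x^{-i}`. -/
noncomputable def RSum (n : ℕ) (s : ℕ → ℤ) (a : ℕ → ℕ) (j : ℕ) (x : ℝ) : ℝ :=
  ∑ i ∈ Finset.Ico j n, (s (i + 1) : ℝ) * (a (i + 1) : ℝ) * x ^ (-(i : ℤ))

/-- `x ∈ I_k`, for the partition of `[0,1]` into
`I_0 = [0, 1/β]`, `I_k = (k/β, (k+1)/β]` for `1 ≤ k ≤ m-1`, `I_m = (m/β, 1]`. -/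
def memI (β : ℝ) (m k : ℕ) (x : ℝ) : Prop :=
  if k = 0 then x ∈ Set.Icc (0 : ℝ) (1 / β)
  else if k = m then x ∈ Set.Ioc ((m : ℝ) / β) 1
  else x ∈ Set.Ioc ((k : ℝ) / β) (((k : ℝ) + 1) / β)

lemma geomaux (L : ℝ) (n : ℕ) :
    (L - 1) * ∑ j ∈ Finset.Icc 2 (n + 1), L ^ (n + 1 - j) = L ^ n - 1 := by
  induction n with
  | zero => simp
  | succ k ih =>
    rw [Finset.sum_Icc_succ_top (by omega : 2 ≤ k + 1 + 1)]
    have h1 : ∑ j ∈ Finset.Icc 2 (k + 1), L ^ (k + 1 + 1 - j)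
        = L * ∑ j ∈ Finset.Icc 2 (k + 1), L ^ (k + 1 - j) := by
      rw [Finset.mul_sum]
      refine Finset.sum_congr rfl fun j hj => ?_
      simp only [Finset.mem_Icc] at hj
      rw [show k + 1 + 1 - j = (k + 1 - j) + 1 by omega, pow_succ]
      ring
    rw [h1]
    simp only [Nat.sub_self, pow_zero]
    linear_combination L * ih

lemma ceil_int_add_nonpos (a : ℤ) (t : ℝ) (h1 : (-1:ℝ) < t) (h2 : t ≤ 0) :
    ⌈(a:ℝ) + t⌉ = a := by
  rw [Int.ceil_eq_iff]
  constructor <;> push_cast <;> linarith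

lemma ceil_int_add_pos (a : ℤ) (t : ℝ) (h1 : (0:ℝ) < t) (h2 : t ≤ 1) :
    ⌈(a:ℝ) + t⌉ = a + 1 := by
  rw [Int.ceil_eq_iff]
  constructor <;> push_cast <;> linarith

/-- If `M(1), …, M(n)` (`n ≥ 2`) are distinct non-zero integers with `M(1) ≥ 2`,
`|M(j)| + 1 < M(1)` for `2 ≤ j ≤ n`, and `|M(j)| ≠ |M(k)| − 1` for all `j, k`, then
`x = M(1) + M(2)/x + … + M(n)/x^{n−1}` has a real solution `β > 1` which is a generalized
Parry number. -/
theorem stmt14 (n : ℕ) (hn : 2 ≤ n) (M : ℕ → ℤ)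
    (hdist : ∀ j k : ℕ, 1 ≤ j → j ≤ n → 1 ≤ k → k ≤ n → j ≠ k → M j ≠ M k)
    (hnz : ∀ j : ℕ, 1 ≤ j → j ≤ n → M j ≠ 0)
    (hM1 : 2 ≤ M 1)
    (hlt : ∀ j : ℕ, 2 ≤ j → j ≤ n → |M j| + 1 < M 1)
    (hne : ∀ j k : ℕ, 1 ≤ j → j ≤ n → 1 ≤ k → k ≤ n → |M j| ≠ |M k| - 1) :
    ∃ β : ℝ, 1 < β ∧ β = ∑ j ∈ Finset.Icc 1 n, (M j : ℝ) * β ^ (1 - (j : ℤ)) ∧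
      IsGenParry β := by
  classical
  -- M 1 ≥ 3
  have hM1ge3 : 3 ≤ M 1 := by
    have h2 := hlt 2 le_rfl hn
    have h2' := hnz 2 (by omega) hn
    have h2'' : 1 ≤ |M 2| := Int.one_le_abs h2'
    omega
  have hM1R : (3:ℝ) ≤ (M 1 : ℝ) := by exact_mod_cast hM1ge3
  set L : ℝ := (M 1 : ℝ) - 1 with hLdef
  set U : ℝ := (M 1 : ℝ) + 1 with hUdef
  have hL2 : (2:ℝ) ≤ L := by rw [hLdef]; linarith
  have hMle : ∀ j, 2 ≤ j → j ≤ n → |(M j:ℝ)| ≤ (M 1:ℝ) - 2 := by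
    intro j hj2 hjn
    have h := hlt j hj2 hjn
    have h2 : |M j| ≤ M 1 - 2 := by omega
    calc |(M j:ℝ)| = ((|M j| : ℤ):ℝ) := by push_cast; ring
    _ ≤ ((M 1 - 2 : ℤ):ℝ) := by exact_mod_cast h2
    _ = (M 1:ℝ) - 2 := by push_cast; ring
  -- the polynomial-like function
  obtain ⟨G, hGdef⟩ : ∃ G : ℝ → ℝ,
      G = fun x => x ^ n - ∑ j ∈ Finset.Icc 1 n, (M j : ℝ) * x ^ (n - j) := ⟨_, rfl⟩
  have hsplit : ∀ x : ℝ, ∑ j ∈ Finset.Icc 1 n, (M j:ℝ) * x ^ (n - j)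
      = (M 1:ℝ) * x ^ (n - 1) + ∑ j ∈ Finset.Icc 2 n, (M j:ℝ) * x ^ (n - j) := by
    intro x
    rw [show Finset.Icc 1 n = insert 1 (Finset.Icc 2 n) by
      ext y; simp only [Finset.mem_Icc, Finset.mem_insert]; omega]
    rw [Finset.sum_insert (by simp)]
  have hgeom : ∀ x : ℝ, (x - 1) * ∑ j ∈ Finset.Icc 2 n, x ^ (n - j) = x ^ (n-1) - 1 := by
    intro x
    have := geomaux x (n - 1)
    rwa [show n - 1 + 1 = n by omega] at this
  have hABS : ∀ x : ℝ, 2 ≤ x → (M 1:ℝ) - 1 ≤ x →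
      |∑ j ∈ Finset.Icc 2 n, (M j:ℝ) * x ^ (n - j)| ≤ x ^ (n-1) - 1 := by
    intro x hx hx2
    have h0 : (0:ℝ) ≤ x := by linarith
    calc |∑ j ∈ Finset.Icc 2 n, (M j:ℝ) * x ^ (n - j)|
        ≤ ∑ j ∈ Finset.Icc 2 n, |(M j:ℝ) * x ^ (n - j)| := Finset.abs_sum_le_sum_abs _ _
    _ ≤ ∑ j ∈ Finset.Icc 2 n, (x - 1) * x ^ (n - j) := by
        refine Finset.sum_le_sum fun j hj => ?_
        simp only [Finset.mem_Icc] at hj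
        rw [abs_mul, abs_pow, abs_of_nonneg h0]
        refine mul_le_mul_of_nonneg_right ?_ (pow_nonneg h0 _)
        have := hMle j hj.1 hj.2
        linarith
    _ = x ^ (n-1) - 1 := by rw [← Finset.mul_sum]; exact hgeom x
  have hcont : Continuous G := by
    rw [hGdef]
    exact (continuous_pow n).sub
      (continuous_finset_sum _ fun j _ => continuous_const.mul (continuous_pow _))
  have hpowL : L ^ n = L ^ (n-1) * L := by
    conv_lhs => rw [show n = (n-1) + 1 by omega]
    rw [pow_succ]
  have hpowU : U ^ n = U ^ (n-1) * U := by
    conv_lhs => rw [show n = (n-1) + 1 by omega]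
    rw [pow_succ]
  have hGL : G L < 0 := by
    have hT := hABS L hL2 (by rw [hLdef])
    have hTlb := neg_abs_le (∑ j ∈ Finset.Icc 2 n, (M j:ℝ) * L ^ (n - j))
    simp only [hGdef]
    rw [hsplit L, hpowL, show (M 1:ℝ) = L + 1 by rw [hLdef]; ring]
    nlinarith
  have hGU : 0 < G U := by
    have hT := hABS U (by rw [hUdef]; linarith) (by rw [hUdef]; linarith)
    have hTub := le_abs_self (∑ j ∈ Finset.Icc 2 n, (M j:ℝ) * U ^ (n - j))
    simp only [hGdef]
    rw [hsplit U, hpowU, show (M 1:ℝ) = U - 1 by rw [hUdef]; ring]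
    nlinarith
  have hLU : L ≤ U := by rw [hLdef, hUdef]; linarith
  obtain ⟨β, hβI, hβ0⟩ : ∃ β ∈ Set.Icc L U, G β = 0 := by
    have h := intermediate_value_Icc hLU hcont.continuousOn
    have h0 : (0:ℝ) ∈ Set.Icc (G L) (G U) := ⟨le_of_lt hGL, le_of_lt hGU⟩
    obtain ⟨β, hβ, hβ0⟩ := h h0
    exact ⟨β, hβ, hβ0⟩
  have hβgtL : L < β := by
    rcases eq_or_lt_of_le hβI.1 with h | h
    · exfalso; rw [← h] at hβ0; linarith
    · exact h
  have hβltU : β < U := by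
    rcases eq_or_lt_of_le hβI.2 with h | h
    · exfalso; rw [h] at hβ0; linarith
    · exact h
  have hβ2 : (2:ℝ) < β := lt_of_le_of_lt hL2 hβgtL
  have hβpos : (0:ℝ) < β := by linarith
  have hβne : β ≠ 0 := ne_of_gt hβpos
  have hβ1 : (1:ℝ) < β := by linarith
  -- the power equation
  have heqn : β ^ n = ∑ j ∈ Finset.Icc 1 n, (M j:ℝ) * β ^ (n - j) := by
    have := hβ0
    simp only [hGdef] at this
    linarith
  have heq : β = ∑ j ∈ Finset.Icc 1 n, (M j : ℝ) * β ^ (1 - (j:ℤ)) := by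
    have h1 : ∑ j ∈ Finset.Icc 1 n, (M j:ℝ) * β ^ (1 - (j:ℤ))
        = (∑ j ∈ Finset.Icc 1 n, (M j:ℝ) * β ^ (n - j)) * β ^ (1 - (n:ℤ)) := by
      rw [Finset.sum_mul]
      refine Finset.sum_congr rfl fun j hj => ?_
      simp only [Finset.mem_Icc] at hj
      rw [mul_assoc]
      congr 1
      rw [← zpow_natCast β (n - j), ← zpow_add₀ hβne]
      congr 1
      omega
    rw [h1, ← heqn, ← zpow_natCast β n, ← zpow_add₀ hβne,
      show (n:ℤ) + (1 - n) = 1 by ring, zpow_one]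
  -- the signed orbit sequence
  obtain ⟨c, hcdef⟩ : ∃ c : ℕ → ℝ,
      c = fun j : ℕ => ∑ i ∈ Finset.Icc (j+1) n, (M i : ℝ) * β ^ ((j:ℤ) - i) := ⟨_, rfl⟩
  have hcn : ∀ j, n ≤ j → c j = 0 := by
    intro j hj
    simp only [hcdef]
    rw [Finset.Icc_eq_empty (by omega : ¬ j + 1 ≤ n), Finset.sum_empty]
  have hc0 : c 0 = 1 := by
    have h2 : β * c 0 = ∑ i ∈ Finset.Icc 1 n, (M i:ℝ) * β ^ (1 - (i:ℤ)) := by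
      simp only [hcdef]
      rw [Finset.mul_sum]
      refine Finset.sum_congr rfl fun i _ => ?_
      rw [show (1:ℤ) - i = 1 + ((0:ℤ) - i) by ring, zpow_add₀ hβne, zpow_one]
      push_cast
      ring
    rw [← heq] at h2
    have := mul_left_cancel₀ hβne (h2.trans (mul_one β).symm)
    exact this
  have hrec : ∀ j, 1 ≤ j → j ≤ n → β * c (j - 1) = (M j : ℝ) + c j := by
    intro j h1 h2
    have e1 : c (j-1) = ∑ i ∈ Finset.Icc j n, (M i:ℝ) * β ^ ((j:ℤ) - 1 - i) := by
      simp only [hcdef]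
      rw [show j - 1 + 1 = j by omega, show ((j - 1 : ℕ) : ℤ) = (j:ℤ) - 1 by omega]
    have e2 : β * c (j-1) = ∑ i ∈ Finset.Icc j n, (M i:ℝ) * β ^ ((j:ℤ) - i) := by
      rw [e1, Finset.mul_sum]
      refine Finset.sum_congr rfl fun i _ => ?_
      rw [show (j:ℤ) - i = 1 + ((j:ℤ) - 1 - i) by ring, zpow_add₀ hβne, zpow_one]
      ring
    rw [e2, show Finset.Icc j n = insert j (Finset.Icc (j+1) n) by
        ext y; simp only [Finset.mem_Icc, Finset.mem_insert]; omega,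
      Finset.sum_insert (by simp)]
    rw [sub_self, zpow_zero, mul_one, hcdef]
  -- the bound D
  obtain ⟨D, hDdef⟩ : ∃ D : ℝ, D = ((M 1:ℝ) - 2) / (β - 1) := ⟨_, rfl⟩
  have hb1pos : (0:ℝ) < β - 1 := by linarith
  have hDnn : 0 ≤ D := hDdef ▸ div_nonneg (by linarith) hb1pos.le
  have hDmul : D * (β - 1) = (M 1:ℝ) - 2 := hDdef ▸ div_mul_cancel₀ _ (ne_of_gt hb1pos)
  have hD1 : D < 1 := by
    rw [hDdef, div_lt_one hb1pos]
    have : (M 1:ℝ) - 1 < β := hβgtL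
    linarith
  have hbd : ∀ j, 1 ≤ j → |c j| ≤ D := by
    have key : ∀ k, ∀ j, 1 ≤ j → n ≤ j + k → |c j| ≤ D := by
      intro k
      induction k with
      | zero =>
        intro j h1 h2
        rw [hcn j (by omega), abs_zero]; exact hDnn
      | succ k ih =>
        intro j h1 h2
        by_cases hjn : n ≤ j
        · rw [hcn j hjn, abs_zero]; exact hDnn
        · push_neg at hjn
          have hr := hrec (j+1) (by omega) (by omega)
          rw [Nat.add_sub_cancel] at hr
          have hcj1 : |c (j+1)| ≤ D := ih (j+1) (by omega) (by omega)
          have hM : |(M (j+1):ℝ)| ≤ (M 1:ℝ) - 2 := hMle (j+1) (by omega) (by omega)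
          have h3 : β * |c j| ≤ ((M 1:ℝ) - 2) + D := by
            have h4 : β * |c j| = |β * c j| := by rw [abs_mul, abs_of_pos hβpos]
            rw [h4, hr]
            calc |(M (j+1):ℝ) + c (j+1)| ≤ |(M (j+1):ℝ)| + |c (j+1)| := abs_add_le _ _
            _ ≤ _ := by linarith
          nlinarith [abs_nonneg (c j)]
    intro j h1
    exact key n j h1 (by omega)
  have hsign : ∀ j, 1 ≤ j → j ≤ n → 0 < (M j:ℝ) * c (j-1) := by
    intro j h1 h2
    have hr := hrec j h1 h2
    have h1a : (1:ℝ) ≤ |(M j:ℝ)| := by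
      have := Int.one_le_abs (hnz j h1 h2)
      calc (1:ℝ) = ((1:ℤ):ℝ) := by norm_num
      _ ≤ ((|M j|:ℤ):ℝ) := by exact_mod_cast this
      _ = |(M j:ℝ)| := by push_cast; ring
    have hcj : |c j| ≤ D := hbd j h1
    have hkey : β * ((M j:ℝ) * c (j-1)) = (M j:ℝ)^2 + (M j:ℝ) * c j := by
      linear_combination (M j:ℝ) * hr
    have h4 : |(M j:ℝ) * c j| ≤ |(M j:ℝ)| * D := by
      rw [abs_mul]
      exact mul_le_mul_of_nonneg_left hcj (abs_nonneg _)
    have h5 : (M j:ℝ)^2 = |(M j:ℝ)|^2 := (sq_abs _).symm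
    have h7 : 0 < (M j:ℝ)^2 + (M j:ℝ) * c j := by
      have h6 := neg_abs_le ((M j:ℝ) * c j)
      have h9 : |(M j:ℝ)| * D < |(M j:ℝ)| * 1 :=
        mul_lt_mul_of_pos_left hD1 (by linarith)
      have h10 : |(M j:ℝ)| ≤ |(M j:ℝ)| * |(M j:ℝ)| :=
        le_mul_of_one_le_left (abs_nonneg _) h1a
      have h11 : |(M j:ℝ)|^2 = |(M j:ℝ)| * |(M j:ℝ)| := pow_two _
      linarith
    by_contra hcon
    push_neg at hcon
    have h8 : β * ((M j:ℝ) * c (j-1)) ≤ 0 := by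
      have := mul_nonneg hβpos.le (neg_nonneg.mpr hcon)
      linarith
    linarith [hkey, h7, h8]
  have hcnz : ∀ j, 1 ≤ j → j < n → c j ≠ 0 := by
    intro j h1 h2 hc
    have := hsign (j+1) (by omega) (by omega)
    rw [Nat.add_sub_cancel, hc, mul_zero] at this
    exact lt_irrefl 0 this
  -- the sign function
  obtain ⟨E, hEdef⟩ : ∃ E : ℕ → ℤ, E = fun k : ℕ =>
      if ∃ j, 1 ≤ j ∧ j ≤ n ∧ (M j:ℝ) * c j < 0 ∧ (k:ℤ) + 1 = |M j| then -1 else 1 :=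
    ⟨_, rfl⟩
  have hE : ∀ k, E k = 1 ∨ E k = -1 := by
    intro k
    simp only [hEdef]
    split_ifs <;> simp
  -- the key step
  have hstep : ∀ j, 1 ≤ j → j ≤ n →
      gbeta β E |c (j - 1)| = |c j| ∨ (c j = 0 ∧ gbeta β E |c (j - 1)| = 1) := by
    intro j h1 h2
    have hr := hrec j h1 h2
    have hsg := hsign j h1 h2
    have hMj := hnz j h1 h2
    have hcj := hbd j h1
    obtain ⟨a, hadef⟩ : ∃ a : ℤ, a = |M j| := ⟨_, rfl⟩
    have ha1 : 1 ≤ a := hadef ▸ Int.one_le_abs hMj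
    have haR : (1:ℝ) ≤ (a:ℝ) := by exact_mod_cast ha1
    obtain ⟨σ, hσdef⟩ : ∃ σ : ℝ, σ = if 0 < M j then 1 else -1 := ⟨_, rfl⟩
    have hσ : (M j : ℝ) = σ * a := by
      simp only [hσdef, hadef]
      rcases lt_trichotomy (M j) 0 with h | h | h
      · rw [if_neg (by omega), abs_of_neg h]; push_cast; ring
      · exact absurd h hMj
      · rw [if_pos h, abs_of_pos h]; push_cast; ring
    have hσsq : σ * σ = 1 := by
      simp only [hσdef]; split_ifs <;> norm_num
    have hσabs : |σ| = 1 := by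
      simp only [hσdef]; split_ifs <;> norm_num
    have h8 : 0 < σ * c (j-1) := by
      rw [hσ] at hsg
      by_contra hcon
      push_neg at hcon
      have h12 := mul_le_mul_of_nonneg_left hcon (by linarith : (0:ℝ) ≤ (a:ℝ))
      rw [mul_zero] at h12
      linarith
    have hcsign : |c (j-1)| = σ * c (j-1) := by
      calc |c (j-1)| = |σ * c (j-1)| := by rw [abs_mul, hσabs, one_mul]
      _ = σ * c (j-1) := abs_of_pos h8
    obtain ⟨t, htdef⟩ : ∃ t : ℝ, t = σ * c j := ⟨_, rfl⟩
    have hbx : β * |c (j-1)| = (a:ℝ) + t := by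
      rw [htdef, hcsign]
      calc β * (σ * c (j-1)) = σ * (β * c (j-1)) := by ring
      _ = σ * ((M j:ℝ) + c j) := by rw [hr]
      _ = (a:ℝ) + σ * c j := by rw [hσ]; linear_combination (a:ℝ) * hσsq
    have htabs : |t| = |c j| := by rw [htdef, abs_mul, hσabs, one_mul]
    have ht1 : |t| < 1 := by rw [htabs]; linarith
    have htlt : t < 1 := (abs_lt.mp ht1).2
    have htgt : -1 < t := (abs_lt.mp ht1).1
    have hMc : (M j:ℝ) * c j = (a:ℝ) * t := by rw [hσ, htdef]; ring
    rcases lt_trichotomy t 0 with htneg | htzero | htpos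
    · -- t < 0 : branch a - 1, sign -1
      have hc1 : ⌈β * |c (j-1)|⌉ = a := by
        rw [hbx]; exact ceil_int_add_nonpos a t htgt htneg.le
      have hbi : branchIdx β |c (j-1)| = (a - 1).toNat := by
        rw [branchIdx, hc1]
      have hEv : E ((a-1).toNat) = -1 := by
        simp only [hEdef]
        rw [if_pos]
        refine ⟨j, h1, h2, ?_, ?_⟩
        · rw [hMc]; exact mul_neg_of_pos_of_neg (by linarith) htneg
        · rw [Int.toNat_of_nonneg (by omega)]; omega
      left
      have hcast : (((a - 1).toNat : ℕ) : ℝ) = (a:ℝ) - 1 := by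
        have h13 : (((a-1).toNat : ℕ) : ℤ) = a - 1 := Int.toNat_of_nonneg (by omega)
        exact_mod_cast h13
      rw [gbeta, hbi, hEv, if_neg (by decide : ¬ (-1:ℤ) = 1), hcast, hbx,
        ← htabs, abs_of_neg htneg]
      ring
    · -- t = 0 : c j = 0
      have hσne : σ ≠ 0 := by simp only [hσdef]; split_ifs <;> norm_num
      have hcj0 : c j = 0 := by
        rcases mul_eq_zero.mp (htdef.symm.trans htzero) with h | h
        · exact absurd h hσne
        · exact h
      have hc1 : ⌈β * |c (j-1)|⌉ = a := by
        rw [hbx, htzero, add_zero, Int.ceil_intCast]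
      have hbi : branchIdx β |c (j-1)| = (a - 1).toNat := by
        rw [branchIdx, hc1]
      have hcast : (((a - 1).toNat : ℕ) : ℝ) = (a:ℝ) - 1 := by
        have h13 : (((a-1).toNat : ℕ) : ℤ) = a - 1 := Int.toNat_of_nonneg (by omega)
        exact_mod_cast h13
      rcases hE ((a-1).toNat) with h | h
      · right
        refine ⟨hcj0, ?_⟩
        rw [gbeta, hbi, h, if_pos rfl, hcast, hbx, htzero]
        ring
      · left
        rw [gbeta, hbi, h, if_neg (by decide : ¬ (-1:ℤ) = 1), hcast, hbx, htzero,
          hcj0, abs_zero]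
        ring
    · -- t > 0 : branch a, sign +1
      have hc1 : ⌈β * |c (j-1)|⌉ = a + 1 := by
        rw [hbx]; exact ceil_int_add_pos a t htpos htlt.le
      have hbi : branchIdx β |c (j-1)| = a.toNat := by
        rw [branchIdx, hc1]
        congr 1
        omega
      have hEv : E (a.toNat) = 1 := by
        simp only [hEdef]
        rw [if_neg]
        rintro ⟨j', hj'1, hj'2, hj'sgn, hj'eq⟩
        rw [Int.toNat_of_nonneg (by omega)] at hj'eq
        exact absurd (by omega : |M j| = |M j'| - 1) (hne j j' h1 h2 hj'1 hj'2)
      left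
      have hcast : ((a.toNat : ℕ) : ℝ) = (a:ℝ) := by
        have h13 : ((a.toNat : ℕ) : ℤ) = a := Int.toNat_of_nonneg (by omega)
        exact_mod_cast h13
      rw [gbeta, hbi, hEv, if_pos rfl, hcast, hbx, ← htabs, abs_of_pos htpos]
      ring
  -- iterate formula
  have hiter : ∀ j, j < n → (gbeta β E)^[j] 1 = |c j| := by
    intro j
    induction j with
    | zero => intro _; simp [hc0]
    | succ k ih =>
      intro hk
      rw [Function.iterate_succ_apply', ih (by omega)]
      rcases hstep (k+1) (by omega) (by omega) with h | h
      · rw [Nat.add_sub_cancel] at h; exact h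
      · exfalso; exact hcnz (k+1) (by omega) hk h.1
  have hfn : (gbeta β E)^[n] 1 = 0 ∨ (gbeta β E)^[n] 1 = 1 := by
    have h1 : (gbeta β E)^[n] 1 = gbeta β E ((gbeta β E)^[n-1] 1) := by
      conv_lhs => rw [show n = (n-1) + 1 by omega]
      rw [Function.iterate_succ_apply']
    rw [h1, hiter (n-1) (by omega)]
    rcases hstep n (by omega) le_rfl with h | h
    · left; rw [h, hcn n le_rfl, abs_zero]
    · right; exact h.2
  have hf0 : gbeta β E 0 = 0 ∨ gbeta β E 0 = 1 := by
    have hb0 : branchIdx β 0 = 0 := by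
      rw [branchIdx, mul_zero, Int.ceil_zero]
      rfl
    rcases hE 0 with h | h
    · left; rw [gbeta, hb0, h, if_pos rfl]; norm_num
    · right; rw [gbeta, hb0, h, if_neg (by decide : ¬ (-1:ℤ) = 1)]; norm_num
  -- eventual periodicity
  have hper : ∃ A B, A < B ∧ B ≤ n + 1 ∧ (gbeta β E)^[B] 1 = (gbeta β E)^[A] 1 := by
    rcases hfn with h | h
    · rcases hf0 with h0 | h0
      · refine ⟨n, n+1, by omega, le_rfl, ?_⟩
        rw [Function.iterate_succ_apply', h, h0]
      · refine ⟨0, n+1, by omega, le_rfl, ?_⟩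
        rw [Function.iterate_succ_apply', h, h0]
        simp
    · refine ⟨0, n, by omega, by omega, ?_⟩
      rw [h]
      simp
  obtain ⟨A, B, hAB, hBle, hBA⟩ := hper
  have hall : ∀ j, ∃ i, i ≤ n + 1 ∧ (gbeta β E)^[j] 1 = (gbeta β E)^[i] 1 := by
    intro j
    induction j using Nat.strong_induction_on with
    | _ j IH =>
      by_cases hj : j ≤ n + 1
      · exact ⟨j, hj, rfl⟩
      · push_neg at hj
        have h2 : (gbeta β E)^[j] 1 = (gbeta β E)^[j - B + A] 1 := by
          have e : (gbeta β E)^[j - B + B] 1 = (gbeta β E)^[j - B + A] 1 := by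
            rw [Function.iterate_add_apply, Function.iterate_add_apply, hBA]
          rwa [show j - B + B = j by omega] at e
        obtain ⟨i, hi, he⟩ := IH (j - B + A) (by omega)
        exact ⟨i, hi, h2.trans he⟩
  have hPCF : IsPCF β E := by
    apply Set.Finite.subset (Set.Finite.image (fun i => (gbeta β E)^[i] 1)
      (Set.finite_Iic (n+1)))
    rintro x ⟨j, hj⟩
    obtain ⟨i, hi, he⟩ := hall j
    refine ⟨i, hi, ?_⟩
    show (gbeta β E)^[i] 1 = x
    rw [← he, hj]
  -- validity
  obtain ⟨m, hmdef⟩ : ∃ m : ℕ, m = (⌈β⌉ - 1).toNat := ⟨_, rfl⟩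
  have hceil3 : 3 ≤ ⌈β⌉ := by
    have : (2:ℤ) < ⌈β⌉ := Int.lt_ceil.mpr (by exact_mod_cast hβ2)
    omega
  have hmcast : (m:ℤ) = ⌈β⌉ - 1 := by
    rw [hmdef, Int.toNat_of_nonneg (by omega)]
  have hmR : (m:ℝ) = (⌈β⌉:ℝ) - 1 := by exact_mod_cast hmcast
  have hvalid : IsGBetaValid m β E := by
    refine ⟨by omega, ?_, ?_, fun k _ => hE k⟩
    · rw [hmR]
      linarith [Int.ceil_lt_add_one β]
    · rw [hmR]
      linarith [Int.le_ceil β]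
  exact ⟨β, hβ1, heq, hβ1, m, E, hvalid, hPCF⟩
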